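/- Fix integers 0 ≤ k ≤ s and reals q, μ > 0, ρ ≥ 0. Then ∫₀^∞ q e^{-q t} [ ∑_{j=0}^{k} C(k,j) e^{-j μ t} (1 - e^{-μ t})^{k - j} · e^{-ρ(1 - e^{-μ t})} (ρ (1 - e^{-μ t}))^{s - j} / (s - j)! ] dt = ∑_{j=0}^{k} ∑_{m=0}^{k + s - 2j} C(k,j) C(k+s-2j, m) (ρ^{s-j} (-1)^m / (s-j)!) · (q / (q + (j + m) μ)) · M(1, q/μ + j + m + 1, -ρ), where M is Kummer's confluent hypergeometric function. -/

import Mathlib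

open MeasureTheory Real Finset Set


/-- Kummer's confluent hypergeometric function `M(1, b, z) = ∑ₙ zⁿ / (b)ₙ`,
where `(b)ₙ = ∏_{i=0}^{n-1} (b + i)` is the Pochhammer symbol. -/
noncomputable def kummerM1 (b z : ℝ) : ℝ :=
  ∑' n : ℕ, z ^ n / ∏ i ∈ Finset.range n, (b + (i : ℝ))


lemma prodPos {b : ℝ} (hb : 0 < b) (n : ℕ) : 0 < ∏ i ∈ range n, (b + (i:ℝ)) :=
  Finset.prod_pos fun i _ => by positivity

lemma findiff (n : ℕ) : ∀ b : ℝ, 0 < b →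
    ∑ m ∈ range (n+1), (-1:ℝ)^m * (n.choose m : ℝ) / (b + m)
      = (n.factorial : ℝ) / ∏ i ∈ range (n+1), (b + (i:ℝ)) := by
  induction n with
  | zero => intro b hb; simp
  | succ n IH =>
    intro b hb
    have hb1 : (0:ℝ) < b + 1 := by linarith
    have key : ∑ m ∈ range (n+2), (-1:ℝ)^m * ((n+1).choose m : ℝ) / (b + m)
        = (∑ m ∈ range (n+1), (-1:ℝ)^m * (n.choose m : ℝ) / (b + m))
          - ∑ m ∈ range (n+1), (-1:ℝ)^m * (n.choose m : ℝ) / ((b+1) + m) := by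
      have hz : (∑ m ∈ range (n+1), (-1:ℝ)^m * (n.choose m : ℝ) / (b + m))
          = ∑ m ∈ range (n+2), (-1:ℝ)^m * (n.choose m : ℝ) / (b + m) := by
        rw [Finset.sum_range_succ (fun m => (-1:ℝ)^m * (n.choose m : ℝ) / (b + m)) (n+1),
          Nat.choose_succ_self]
        simp
      rw [hz,
        Finset.sum_range_succ' (fun m => (-1:ℝ)^m * ((n+1).choose m : ℝ) / (b + m)) (n+1),
        Finset.sum_range_succ' (fun m => (-1:ℝ)^m * (n.choose m : ℝ) / (b + m)) (n+1)]
      have e1 : ∀ i ∈ range (n+1), (-1:ℝ)^(i+1) * (((n+1).choose (i+1)) : ℝ) / (b + ((i+1:ℕ):ℝ))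
          = (-1:ℝ)^(i+1) * ((n.choose (i+1)) : ℝ) / (b + ((i+1:ℕ):ℝ))
            - (-1:ℝ)^i * (n.choose i : ℝ) / ((b+1) + i) := by
        intro i _
        rw [Nat.choose_succ_succ]
        push_cast
        ring
      rw [Finset.sum_congr rfl e1, Finset.sum_sub_distrib]
      simp only [Nat.choose_zero_right, pow_zero, Nat.cast_one, Nat.cast_zero]
      ring
    rw [key, IH b hb, IH (b+1) hb1]
    have hQ1 : ∏ i ∈ range (n+2), (b + (i:ℝ))
        = (∏ i ∈ range (n+1), (b + (i:ℝ))) * (b + (n+1)) := by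
      rw [Finset.prod_range_succ]; push_cast; ring
    have hQ2 : ∏ i ∈ range (n+2), (b + (i:ℝ))
        = b * ∏ i ∈ range (n+1), ((b+1) + (i:ℝ)) := by
      rw [Finset.prod_range_succ' (fun i => (b + (i:ℝ))) (n+1)]
      have : ∀ i ∈ range (n+1), (b + ((i+1:ℕ):ℝ)) = (b+1) + (i:ℝ) := by
        intro i _; push_cast; ring
      rw [Finset.prod_congr rfl this]
      push_cast; ring
    have hPb := (prodPos hb (n+1)).ne'
    have hPb1 := (prodPos hb1 (n+1)).ne'
    have hQ := (prodPos hb (n+2)).ne'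
    rw [div_sub_div _ _ hPb hPb1, div_eq_div_iff (by positivity) hQ]
    push_cast [Nat.factorial_succ]
    linear_combination ((n.factorial : ℝ) * (∏ i ∈ range (n+1), ((b+1) + (i:ℝ)))) * hQ1
      - ((n.factorial : ℝ) * (∏ i ∈ range (n+1), (b + (i:ℝ)))) * hQ2

lemma one_sub_pow (E : ℝ) (n : ℕ) :
    (1 - E)^n = ∑ m ∈ range (n+1), (-1:ℝ)^m * (n.choose m : ℝ) * E^m := by
  have : (1 - E) = (-E) + 1 := by ring
  rw [this, add_pow]
  apply Finset.sum_congr rfl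
  intro m _
  rw [neg_pow]
  ring

lemma integral_exp_rate {c : ℝ} (hc : 0 < c) :
    ∫ t in Ioi (0:ℝ), exp (-(c*t)) = 1/c := by
  have h := integral_comp_mul_left_Ioi (fun x => exp (-x)) 0 hc
  simp only [mul_zero, integral_exp_neg_Ioi_zero, smul_eq_mul, mul_one] at h
  rw [h, one_div]

lemma intOn_exp_mul {c C : ℝ} (hc : 0 < c) {g : ℝ → ℝ} (hg : Continuous g)
    (hC : ∀ t ∈ Ioi (0:ℝ), |g t| ≤ C) :
    IntegrableOn (fun t => exp (-(c*t)) * g t) (Ioi (0:ℝ)) := by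
  have hG : IntegrableOn (fun t => C * exp (-c * t)) (Ioi (0:ℝ)) :=
    (exp_neg_integrableOn_Ioi 0 hc).const_mul C
  apply Integrable.mono' hG
  · exact ((Real.continuous_exp.comp (continuous_const.mul continuous_id).neg).mul
      hg).aestronglyMeasurable
  · filter_upwards [ae_restrict_mem measurableSet_Ioi] with t ht
    rw [norm_mul, Real.norm_eq_abs, Real.norm_eq_abs, abs_of_pos (exp_pos _), neg_mul,
      mul_comm C]
    exact mul_le_mul_of_nonneg_left (hC t ht) (exp_pos _).le

lemma J_eq {b : ℝ} (hb : 0 < b) (n : ℕ) :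
    ∫ t in Ioi (0:ℝ), exp (-(b*t)) * (1 - exp (-t))^n
      = (n.factorial : ℝ) / ∏ i ∈ range (n+1), (b + (i:ℝ)) := by
  have hpt : ∀ t : ℝ, exp (-(b*t)) * (1 - exp (-t))^n
      = ∑ m ∈ range (n+1), (-1:ℝ)^m * (n.choose m : ℝ) * exp (-((b+m)*t)) := by
    intro t
    rw [one_sub_pow, Finset.mul_sum]
    apply Finset.sum_congr rfl
    intro m _
    rw [← Real.exp_nat_mul, mul_left_comm, ← Real.exp_add,
      show -(b*t) + (m:ℝ) * -t = -((b+(m:ℝ))*t) by ring]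
  simp_rw [hpt]
  rw [MeasureTheory.integral_finset_sum]
  · have : ∀ m ∈ range (n+1), ∫ t in Ioi (0:ℝ), (-1:ℝ)^m * (n.choose m : ℝ) * exp (-((b+m)*t))
        = (-1:ℝ)^m * (n.choose m : ℝ) / (b + m) := by
      intro m _
      rw [MeasureTheory.integral_const_mul, integral_exp_rate (by positivity)]
      ring
    rw [Finset.sum_congr rfl this, findiff n b hb]
  · intro m _
    apply Integrable.const_mul
    have hbm : (0:ℝ) < b + m := by positivity
    have := exp_neg_integrableOn_Ioi 0 hbm
    simp only [neg_mul] at this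
    exact this

lemma exp_tsum_pt (x : ℝ) : exp x = ∑' n : ℕ, x ^ n / (n.factorial : ℝ) := by
  rw [Real.exp_eq_exp_ℝ, NormedSpace.exp_eq_tsum_div]

lemma core {b ρ : ℝ} (hb : 0 < b) (hρ : 0 ≤ ρ) :
    ∫ t in Ioi (0:ℝ), exp (-(b*t)) * exp (-(ρ * (1 - exp (-t))))
      = kummerM1 (b+1) (-ρ) / b := by
  set F : ℕ → ℝ → ℝ :=
    fun n t => exp (-(b*t)) * ((-(ρ * (1 - exp (-t))))^n / (n.factorial : ℝ)) with hF
  have hu : ∀ t : ℝ, t ∈ Ioi (0:ℝ) → 0 ≤ 1 - exp (-t) ∧ 1 - exp (-t) ≤ 1 := by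
    intro t ht
    have ht' : (0:ℝ) < t := ht
    have h1 : exp (-t) ≤ 1 := exp_le_one_iff.mpr (by linarith)
    have h2 := exp_pos (-t)
    constructor <;> linarith
  have hcont : ∀ n : ℕ, Continuous (fun t : ℝ => (-(ρ * (1 - exp (-t))))^n / (n.factorial : ℝ)) := by
    intro n; fun_prop
  have hbound : ∀ n : ℕ, ∀ t ∈ Ioi (0:ℝ),
      |(-(ρ * (1 - exp (-t))))^n / (n.factorial : ℝ)| ≤ ρ^n / (n.factorial : ℝ) := by
    intro n t ht
    obtain ⟨h1, h2⟩ := hu t ht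
    rw [abs_div, abs_pow, abs_neg, abs_of_nonneg (mul_nonneg hρ h1),
      abs_of_nonneg (Nat.cast_nonneg n.factorial)]
    gcongr <;> nlinarith [mul_nonneg hρ h1]
  have hint : ∀ n : ℕ, IntegrableOn (F n) (Ioi (0:ℝ)) := fun n =>
    intOn_exp_mul hb (hcont n) (hbound n)
  have hnormval : ∀ n : ℕ, ∫ t in Ioi (0:ℝ), ‖F n t‖
      ≤ ρ^n / (n.factorial : ℝ) * (1/b) := by
    intro n
    have hle : ∀ t ∈ Ioi (0:ℝ), ‖F n t‖ ≤ ρ^n / (n.factorial : ℝ) * exp (-(b*t)) := by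
      intro t ht
      rw [hF]
      rw [norm_mul, Real.norm_eq_abs, Real.norm_eq_abs, abs_of_pos (exp_pos _), mul_comm]
      exact mul_le_mul_of_nonneg_right (hbound n t ht) (exp_pos _).le
    have hint2 : IntegrableOn (fun t => ρ^n / (n.factorial : ℝ) * exp (-(b*t))) (Ioi (0:ℝ)) := by
      apply Integrable.const_mul
      have := exp_neg_integrableOn_Ioi 0 hb
      simp only [neg_mul] at this
      exact this
    calc ∫ t in Ioi (0:ℝ), ‖F n t‖
        ≤ ∫ t in Ioi (0:ℝ), ρ^n / (n.factorial : ℝ) * exp (-(b*t)) :=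
          setIntegral_mono_on (hint n).norm hint2 measurableSet_Ioi hle
      _ = ρ^n / (n.factorial : ℝ) * (1/b) := by
          rw [MeasureTheory.integral_const_mul, integral_exp_rate hb]
  have hsum : Summable fun n => ∫ t in Ioi (0:ℝ), ‖F n t‖ := by
    apply Summable.of_nonneg_of_le
      (fun n => integral_nonneg fun t => norm_nonneg _) hnormval
    have := (Real.summable_pow_div_factorial ρ).mul_right (1/b)
    simpa using this
  have hswap := MeasureTheory.integral_tsum_of_summable_integral_norm hint hsum
  have hpt : ∀ t : ℝ, exp (-(b*t)) * exp (-(ρ * (1 - exp (-t)))) = ∑' n, F n t := by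
    intro t
    rw [exp_tsum_pt (-(ρ * (1 - exp (-t)))), ← tsum_mul_left]
  have hterm : ∀ n : ℕ, (∫ t in Ioi (0:ℝ), F n t)
      = (-ρ)^n / ∏ i ∈ range (n+1), (b + (i:ℝ)) := by
    intro n
    have hptn : ∀ t : ℝ, F n t = (-ρ)^n / (n.factorial : ℝ)
        * (exp (-(b*t)) * (1 - exp (-t))^n) := by
      intro t
      simp only [hF]
      rw [show (-(ρ * (1 - exp (-t))))^n = (-ρ)^n * (1 - exp (-t))^n by
        rw [← mul_pow]; ring_nf]
      ring
    simp_rw [hptn]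
    rw [MeasureTheory.integral_const_mul, J_eq hb n, div_mul_div_comm, div_eq_div_iff]
    · ring
    · positivity
    · exact (prodPos hb (n+1)).ne'
  rw [show (∫ t in Ioi (0:ℝ), exp (-(b*t)) * exp (-(ρ * (1 - exp (-t)))))
      = ∫ t in Ioi (0:ℝ), ∑' n, F n t from by
        apply setIntegral_congr_fun measurableSet_Ioi; intro t _; exact hpt t,
    ← hswap]
  rw [tsum_congr hterm, kummerM1, ← tsum_div_const]
  apply tsum_congr
  intro n
  have : ∏ i ∈ range (n+1), (b + (i:ℝ)) = (∏ i ∈ range n, ((b+1) + (i:ℝ))) * b := by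
    rw [Finset.prod_range_succ' (fun i => (b + (i:ℝ))) n]
    have : ∀ i ∈ range n, (b + ((i+1:ℕ):ℝ)) = (b+1) + (i:ℝ) := by
      intro i _; push_cast; ring
    rw [Finset.prod_congr rfl this]
    push_cast; ring
  rw [this, div_div]

lemma scaled {c μ ρ : ℝ} (hc : 0 < c) (hμ : 0 < μ) (hρ : 0 ≤ ρ) :
    ∫ t in Ioi (0:ℝ), exp (-(c*t)) * exp (-(ρ * (1 - exp (-(μ*t)))))
      = (1/c) * kummerM1 (c/μ + 1) (-ρ) := by
  have hb : 0 < c/μ := div_pos hc hμ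
  have h := integral_comp_mul_left_Ioi
    (fun s => exp (-((c/μ)*s)) * exp (-(ρ * (1 - exp (-s))))) 0 hμ
  simp only [mul_zero] at h
  rw [core hb hρ] at h
  have heq : ∀ t ∈ Ioi (0:ℝ), exp (-(c*t)) * exp (-(ρ * (1 - exp (-(μ*t)))))
      = exp (-((c/μ)*(μ*t))) * exp (-(ρ * (1 - exp (-(μ*t))))) := by
    intro t _
    rw [show (c/μ)*(μ*t) = c*t by field_simp]
  rw [setIntegral_congr_fun measurableSet_Ioi heq, h, smul_eq_mul]
  field_simp


theorem stmt_12 (k s : ℕ) (hks : k ≤ s) (q μ ρ : ℝ) (hq : 0 < q) (hμ : 0 < μ) (hρ : 0 ≤ ρ) :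
    ∫ t in Set.Ioi (0 : ℝ), q * Real.exp (-q * t) *
        ∑ j ∈ Finset.range (k + 1),
          (k.choose j : ℝ) * Real.exp (-(j : ℝ) * μ * t) * (1 - Real.exp (-μ * t)) ^ (k - j)
            * Real.exp (-ρ * (1 - Real.exp (-μ * t)))
            * (ρ * (1 - Real.exp (-μ * t))) ^ (s - j) / (Nat.factorial (s - j) : ℝ)
      = ∑ j ∈ Finset.range (k + 1), ∑ m ∈ Finset.range (k + s - 2 * j + 1),
          (k.choose j : ℝ) * ((k + s - 2 * j).choose m : ℝ)
            * (ρ ^ (s - j) * (-1 : ℝ) ^ m / (Nat.factorial (s - j) : ℝ))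
            * (q / (q + ((j : ℝ) + (m : ℝ)) * μ))
            * kummerM1 (q / μ + (j : ℝ) + (m : ℝ) + 1) (-ρ) := by
  set G : ℕ → ℕ → ℝ → ℝ := fun j m t =>
    (k.choose j : ℝ) * ((k + s - 2 * j).choose m : ℝ)
      * (ρ ^ (s - j) * (-1 : ℝ) ^ m / (Nat.factorial (s - j) : ℝ))
      * (q * (exp (-((q + ((j:ℝ) + (m:ℝ)) * μ) * t)) * exp (-(ρ * (1 - exp (-(μ*t))))))) with hG
  have hpt : ∀ t : ℝ, q * Real.exp (-q * t) *
        ∑ j ∈ Finset.range (k + 1),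
          (k.choose j : ℝ) * Real.exp (-(j : ℝ) * μ * t) * (1 - Real.exp (-μ * t)) ^ (k - j)
            * Real.exp (-ρ * (1 - Real.exp (-μ * t)))
            * (ρ * (1 - Real.exp (-μ * t))) ^ (s - j) / (Nat.factorial (s - j) : ℝ)
      = ∑ j ∈ Finset.range (k + 1), ∑ m ∈ Finset.range (k + s - 2 * j + 1), G j m t := by
    intro t
    rw [Finset.mul_sum]
    apply Finset.sum_congr rfl
    intro j hj
    have hjk : j ≤ k := Nat.lt_succ_iff.mp (Finset.mem_range.mp hj)
    set E := Real.exp (-μ * t) with hE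
    set N := k + s - 2 * j with hN
    have hNeq : (k - j) + (s - j) = N := by omega
    have step1 : q * Real.exp (-q * t) *
        ((k.choose j : ℝ) * Real.exp (-(j : ℝ) * μ * t) * (1 - E) ^ (k - j)
            * Real.exp (-ρ * (1 - E))
            * (ρ * (1 - E)) ^ (s - j) / (Nat.factorial (s - j) : ℝ))
        = (q * (k.choose j : ℝ) * ρ ^ (s-j) / (Nat.factorial (s - j) : ℝ))
            * (Real.exp (-q * t) * Real.exp (-(j : ℝ) * μ * t))
            * Real.exp (-ρ * (1 - E)) * (1 - E) ^ N := by
      rw [mul_pow, ← hNeq, pow_add]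
      ring
    rw [step1, one_sub_pow E N, Finset.mul_sum]
    apply Finset.sum_congr rfl
    intro m _
    have hexp : Real.exp (-q * t) * Real.exp (-(j : ℝ) * μ * t) * Real.exp ((m:ℝ) * (-μ * t))
        = exp (-((q + ((j:ℝ) + (m:ℝ)) * μ) * t)) := by
      rw [← Real.exp_add, ← Real.exp_add]
      congr 1
      ring
    have hEm : E ^ m = Real.exp ((m:ℝ) * (-μ * t)) := by
      rw [hE, ← Real.exp_nat_mul]
    have hρE : Real.exp (-ρ * (1 - E)) = exp (-(ρ * (1 - exp (-(μ*t))))) := by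
      rw [hE]; congr 1; ring_nf
    rw [hG]
    simp only []
    rw [hEm, ← hexp, hρE]
    ring
  rw [setIntegral_congr_fun measurableSet_Ioi (fun t _ => hpt t)]
  have hq' : ∀ j m : ℕ, (0:ℝ) < q + ((j:ℝ)+(m:ℝ))*μ := fun j m => by positivity
  have hgb : ∀ t ∈ Ioi (0:ℝ), |exp (-(ρ * (1 - exp (-(μ*t)))))| ≤ 1 := by
    intro t ht
    have ht' : (0:ℝ) < t := ht
    have h1 : exp (-(μ*t)) ≤ 1 := exp_le_one_iff.mpr (by nlinarith)
    rw [abs_of_pos (exp_pos _)]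
    exact exp_le_one_iff.mpr (by nlinarith)
  have hintG : ∀ j m : ℕ, IntegrableOn (G j m) (Ioi (0:ℝ)) := by
    intro j m
    have h := (intOn_exp_mul (hq' j m) (by fun_prop) hgb).const_mul
      ((k.choose j : ℝ) * ((k + s - 2 * j).choose m : ℝ)
        * (ρ ^ (s - j) * (-1 : ℝ) ^ m / (Nat.factorial (s - j) : ℝ)) * q)
    have heq : G j m = fun t => ((k.choose j : ℝ) * ((k + s - 2 * j).choose m : ℝ)
        * (ρ ^ (s - j) * (-1 : ℝ) ^ m / (Nat.factorial (s - j) : ℝ)) * q)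
        * (exp (-((q + ((j:ℝ) + (m:ℝ)) * μ) * t)) * exp (-(ρ * (1 - exp (-(μ*t)))))) := by
      funext t
      simp only [hG]
      ring
    rw [heq]
    exact h
  rw [MeasureTheory.integral_finset_sum _
    (fun j _ => integrable_finset_sum _ (fun m _ => hintG j m))]
  apply Finset.sum_congr rfl
  intro j _
  rw [MeasureTheory.integral_finset_sum _ (fun m _ => hintG j m)]
  apply Finset.sum_congr rfl
  intro m _
  simp only [hG]
  rw [MeasureTheory.integral_const_mul, MeasureTheory.integral_const_mul,
    scaled (hq' j m) hμ hρ]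
  have harg : (q + ((j:ℝ)+(m:ℝ))*μ)/μ + 1 = q/μ + (j:ℝ) + (m:ℝ) + 1 := by
    field_simp
    ring
  rw [harg]
  ring
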